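/- The automaton with states {∨-state, ∧-state, third state, accepting sink} over alphabet {a,b,c} depicted in the paper (Figure: Example alt), recognising the language L of words in which a occurs finitely often and c occurs infinitely often, is neither ∃-GFG nor ∀-GFG: Adam wins Eve's letter game and Eve wins Adam's letter game. -/

import Mathlib

namespace GFGPaper

/-- Positive Boolean formulas over `Q`. -/
inductive PosBool (Q : Type) : Type
  | atom : Q → PosBool Q
  | band : PosBool Q → PosBool Q → PosBool Q
  | bor  : PosBool Q → PosBool Q → PosBool Q

/-- A (positional) choice of Eve inside a positive Boolean formula:
she resolves every disjunction (possibly differently in different conjuncts). -/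
inductive EveChoice {Q : Type} : PosBool Q → Type
  | atom (q : Q) : EveChoice (PosBool.atom q)
  | band {φ ψ : PosBool Q} : EveChoice φ → EveChoice ψ → EveChoice (PosBool.band φ ψ)
  | borl {φ ψ : PosBool Q} : EveChoice φ → EveChoice (PosBool.bor φ ψ)
  | borr {φ ψ : PosBool Q} : EveChoice ψ → EveChoice (PosBool.bor φ ψ)

/-- The atoms that Adam (resolving conjunctions) can reach against Eve's choice. -/
def EveChoice.outcome {Q : Type} : {φ : PosBool Q} → EveChoice φ → Set Q
  | _, .atom q => {q}
  | _, .band c d => c.outcome ∪ d.outcome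
  | _, .borl c => c.outcome
  | _, .borr c => c.outcome

/-- A choice of Adam inside a positive Boolean formula: he resolves every conjunction. -/
inductive AdamChoice {Q : Type} : PosBool Q → Type
  | atom (q : Q) : AdamChoice (PosBool.atom q)
  | bandl {φ ψ : PosBool Q} : AdamChoice φ → AdamChoice (PosBool.band φ ψ)
  | bandr {φ ψ : PosBool Q} : AdamChoice ψ → AdamChoice (PosBool.band φ ψ)
  | bor {φ ψ : PosBool Q} : AdamChoice φ → AdamChoice ψ → AdamChoice (PosBool.bor φ ψ)

/-- The atoms Eve (resolving disjunctions) can reach against Adam's choice. -/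
def AdamChoice.outcome {Q : Type} : {φ : PosBool Q} → AdamChoice φ → Set Q
  | _, .atom q => {q}
  | _, .bandl c => c.outcome
  | _, .bandr c => c.outcome
  | _, .bor c d => c.outcome ∪ d.outcome

/-- The unique atom reached when Eve plays `e` and Adam plays `a` on the same formula. -/
def resolve {Q : Type} : {φ : PosBool Q} → EveChoice φ → AdamChoice φ → Q
  | _, .atom q, _ => q
  | _, .band c _, .bandl e => resolve c e
  | _, .band _ d, .bandr e => resolve d e
  | _, .borl c, .bor e _ => resolve c e
  | _, .borr c, .bor _ f => resolve c f

def InfOften (p : ℕ → Prop) : Prop := ∀ N, ∃ n, N ≤ n ∧ p n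

/-- The parity condition: the maximal priority occurring infinitely often is even. -/
def ParityAcc (c : ℕ → ℕ) : Prop :=
  ∃ p, Even p ∧ InfOften (fun n => c n = p) ∧ ∀ q, p < q → ¬ InfOften (fun n => c n = q)

/-- An alternating automaton with an abstract acceptance condition on
infinite sequences of transitions. -/
structure AltAut (A Q : Type) where
  init : Q
  δ : Q → A → PosBool Q
  acc : (ℕ → Q × A × Q) → Prop

def trace {A Q : Type} (w : ℕ → A) (ρ : ℕ → Q) : ℕ → Q × A × Q :=
  fun n => (ρ n, w n, ρ (n + 1))

/-- Acceptance via the model-checking game: Eve has a (history-dependent)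
strategy resolving the disjunctions such that every consistent path
(i.e. every way for Adam to resolve the conjunctions) is accepting. -/
def AltAut.Accepts {A Q : Type} (M : AltAut A Q) (w : ℕ → A) : Prop :=
  ∃ σ : List Q → (n : ℕ) → (q : Q) → EveChoice (M.δ q (w n)),
    ∀ ρ : ℕ → Q, ρ 0 = M.init →
      (∀ n, ρ (n + 1) ∈ (σ (List.ofFn fun i : Fin n => ρ i.val) n (ρ n)).outcome) →
      M.acc (trace w ρ)

/-- Eve wins her letter game: she resolves disjunctions online (knowing only the
play so far) so that whenever the word Adam produces is in the language,
the constructed path is accepting. -/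
def ExistsGFG {A Q : Type} (M : AltAut A Q) : Prop :=
  ∃ σ : List (A × Q) → (a : A) → (q : Q) → EveChoice (M.δ q a),
    ∀ (w : ℕ → A) (ρ : ℕ → Q), ρ 0 = M.init →
      (∀ n, ρ (n + 1) ∈
        (σ (List.ofFn fun i : Fin n => (w i.val, ρ (i.val + 1))) (w n) (ρ n)).outcome) →
      M.Accepts w → M.acc (trace w ρ)

/-- Adam wins his letter game: he resolves conjunctions online so that whenever the
word is not in the language, the constructed path is rejecting. -/
def ForallGFG {A Q : Type} (M : AltAut A Q) : Prop :=
  ∃ τ : List (A × Q) → (a : A) → (q : Q) → AdamChoice (M.δ q a),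
    ∀ (w : ℕ → A) (ρ : ℕ → Q), ρ 0 = M.init →
      (∀ n, ρ (n + 1) ∈
        (τ (List.ofFn fun i : Fin n => (w i.val, ρ (i.val + 1))) (w n) (ρ n)).outcome) →
      M.Accepts w ∨ ¬ M.acc (trace w ρ)

/-- Eve wins her letter game with a strategy that is positional in the expanded
letter game, i.e. depends only on the word read so far and the current state. -/
def EveWinsPositional {A Q : Type} (M : AltAut A Q) : Prop :=
  ∃ σ : List A → (a : A) → (q : Q) → EveChoice (M.δ q a),
    ∀ (w : ℕ → A) (ρ : ℕ → Q), ρ 0 = M.init →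
      (∀ n, ρ (n + 1) ∈ (σ (List.ofFn fun i : Fin n => w i.val) (w n) (ρ n)).outcome) →
      M.Accepts w → M.acc (trace w ρ)

/-- Alternating parity automaton (priorities on transitions). -/
structure APW (A Q : Type) where
  init : Q
  δ : Q → A → PosBool Q
  prio : Q → A → Q → ℕ

def APW.toAlt {A Q : Type} (M : APW A Q) : AltAut A Q :=
  { init := M.init, δ := M.δ,
    acc := fun t => ParityAcc fun n => M.prio (t n).1 (t n).2.1 (t n).2.2 }

def APW.Accepts {A Q : Type} (M : APW A Q) (w : ℕ → A) : Prop := M.toAlt.Accepts w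

def PosBool.dual {Q : Type} : PosBool Q → PosBool Q
  | .atom q => .atom q
  | .band φ ψ => .bor φ.dual ψ.dual
  | .bor φ ψ => .band φ.dual ψ.dual

/-- The dual automaton: swap ∧/∨ and increase all priorities by one. -/
def APW.dual {A Q : Type} (M : APW A Q) : APW A Q :=
  { init := M.init, δ := fun q a => (M.δ q a).dual,
    prio := fun q a q' => M.prio q a q' + 1 }

/-- The box of a positional Eve strategy on the one-step arena over `a`. -/
def stratBox {A Q : Type} (δ : Q → A → PosBool Q) (a : A)
    (σ : (q : Q) → EveChoice (δ q a)) : Set (Q × A × Q) :=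
  { t | t.2.1 = a ∧ t.2.2 ∈ (σ t.1).outcome }

def BoxesAt {A Q : Type} (δ : Q → A → PosBool Q) (a : A) : Set (Set (Q × A × Q)) :=
  Set.range (stratBox δ a)

def Boxes {A Q : Type} (δ : Q → A → PosBool Q) : Set (Set (Q × A × Q)) :=
  ⋃ a, BoxesAt δ a

/-- A sequence of boxes is universally accepting if every path through it is accepting. -/
def UnivAcc {A Q : Type} (M : AltAut A Q) (β : ℕ → Set (Q × A × Q)) : Prop :=
  ∀ (ρ : ℕ → Q) (wa : ℕ → A), ρ 0 = M.init →
    (∀ n, (ρ n, wa n, ρ (n + 1)) ∈ β n) →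
    M.acc (fun n => (ρ n, wa n, ρ (n + 1)))

/-- Deterministic parity automaton (priorities on transitions). -/
structure DPA (A P : Type) where
  init : P
  step : P → A → P
  prio : P → A → ℕ

def DPA.run {A P : Type} (D : DPA A P) (w : ℕ → A) : ℕ → P
  | 0 => D.init
  | n + 1 => D.step (DPA.run D w n) (w n)

def DPA.Accepts {A P : Type} (D : DPA A P) (w : ℕ → A) : Prop :=
  ParityAcc fun n => D.prio (D.run w n) (w n)

def pref {A : Type} (w : ℕ → A) (n : ℕ) : List A := List.ofFn fun i : Fin n => w i.val

/-- Nondeterministic parity automaton. -/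
structure NPA (A P : Type) where
  init : P
  Δ : P → A → Set P
  prio : P → A → P → ℕ

def NPA.IsRun {A P : Type} (N : NPA A P) (w : ℕ → A) (ρ : ℕ → P) : Prop :=
  ρ 0 = N.init ∧ ∀ n, ρ (n + 1) ∈ N.Δ (ρ n) (w n)

def NPA.Accepts {A P : Type} (N : NPA A P) (w : ℕ → A) : Prop :=
  ∃ ρ, N.IsRun w ρ ∧ ParityAcc fun n => N.prio (ρ n) (w n) (ρ (n + 1))

/-- A nondeterministic automaton is GFG if its nondeterminism can be resolved
based only on the prefix of the word read so far. -/
def NPA.GFG {A P : Type} (N : NPA A P) : Prop :=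
  ∃ f : List A → P, f [] = N.init ∧ (∀ u a, f (u ++ [a]) ∈ N.Δ (f u) a) ∧
    ∀ w : ℕ → A, N.Accepts w →
      ParityAcc fun n => N.prio (f (pref w n)) (w n) (f (pref w (n + 1)))

/-- Universal parity automaton. -/
structure UPA (A P : Type) where
  init : P
  Δ : P → A → Set P
  prio : P → A → P → ℕ

def UPA.IsRun {A P : Type} (N : UPA A P) (w : ℕ → A) (ρ : ℕ → P) : Prop :=
  ρ 0 = N.init ∧ ∀ n, ρ (n + 1) ∈ N.Δ (ρ n) (w n)

def UPA.Accepts {A P : Type} (N : UPA A P) (w : ℕ → A) : Prop :=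
  ∀ ρ, N.IsRun w ρ → ParityAcc fun n => N.prio (ρ n) (w n) (ρ (n + 1))

/-- A universal automaton is GFG if its universality can be resolved online:
on every word outside the language the produced run is rejecting. -/
def UPA.GFG {A P : Type} (N : UPA A P) : Prop :=
  ∃ f : List A → P, f [] = N.init ∧ (∀ u a, f (u ++ [a]) ∈ N.Δ (f u) a) ∧
    ∀ w : ℕ → A, ¬ N.Accepts w →
      ¬ ParityAcc fun n => N.prio (f (pref w n)) (w n) (f (pref w (n + 1)))

/-- A run of the box automaton `A^□` over `w` is a sequence of boxes. -/
def BoxRun {A Q : Type} (M : APW A Q) (w : ℕ → A) (β : ℕ → Set (Q × A × Q)) : Prop :=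
  ∀ n, β n ∈ BoxesAt M.δ (w n)

/-- Acceptance of the box automaton `A^□` built on a deterministic automaton `B`
over boxes: some box run is accepted by `B`. -/
def boxAccepts {A Q P : Type} (M : APW A Q) (B : DPA (Set (Q × A × Q)) P)
    (w : ℕ → A) : Prop :=
  ∃ β, BoxRun M w β ∧ B.Accepts β

/-- GFGness of the box automaton `A^□`: the box (its only nondeterminism) can be
chosen based only on the prefix of the word read. -/
def boxGFG {A Q P : Type} (M : APW A Q) (B : DPA (Set (Q × A × Q)) P) : Prop :=
  ∃ g : List A → A → Set (Q × A × Q),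
    (∀ u a, g u a ∈ BoxesAt M.δ a) ∧
    ∀ w : ℕ → A, boxAccepts M B w → B.Accepts (fun n => g (pref w n) (w n))

/-- A Rabin/Streett pair of sets of transitions. -/
structure RabinPair (T : Type) where
  bad : Set T
  good : Set T

def RabinAcc {T : Type} (pairs : Set (RabinPair T)) (t : ℕ → T) : Prop :=
  ∃ p ∈ pairs, (¬ InfOften fun n => t n ∈ p.bad) ∧ InfOften fun n => t n ∈ p.good

def StreettAcc {T : Type} (pairs : Set (RabinPair T)) (t : ℕ → T) : Prop :=
  ∀ p ∈ pairs, (¬ InfOften fun n => t n ∈ p.bad) ∨ InfOften fun n => t n ∈ p.good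

/-- Alternating Rabin automaton. -/
structure ARW (A Q : Type) where
  init : Q
  δ : Q → A → PosBool Q
  pairs : Set (RabinPair (Q × A × Q))

def ARW.toAlt {A Q : Type} (M : ARW A Q) : AltAut A Q :=
  { init := M.init, δ := M.δ, acc := RabinAcc M.pairs }

/-- Alternating Streett automaton. -/
structure ASW (A Q : Type) where
  init : Q
  δ : Q → A → PosBool Q
  pairs : Set (RabinPair (Q × A × Q))

def ASW.toAlt {A Q : Type} (M : ASW A Q) : AltAut A Q :=
  { init := M.init, δ := M.δ, acc := StreettAcc M.pairs }

end GFGPaper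

namespace GFGPaper

/-- The three-letter alphabet `{a, b, c}`. -/
inductive L3 : Type
  | la | lb | lc
deriving DecidableEq

/-- The five states of the example automaton: the ∨-state, the ∧-state, the
third state, the accepting sink, and the rejecting sink. -/
inductive St5 : Type
  | s0 | s1 | s2 | s3 | dead
deriving DecidableEq

open L3 St5 in
/-- The alternating weak (Büchi on states `{s1, s3}`) automaton of the example:
it recognises the words in which `a` occurs finitely often and `c` occurs
infinitely often; omitted transitions go to a rejecting sink. -/
def exampleAut : AltAut L3 St5 where
  init := s0
  δ := fun q x =>
    match q, x with
    | s0, la => .atom s0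
    | s0, lb => .bor (.atom s0) (.atom s1)
    | s0, lc => .bor (.atom s0) (.atom s1)
    | s1, la => .atom dead
    | s1, lb => .band (.atom s1) (.atom s2)
    | s1, lc => .atom s1
    | s2, la => .atom dead
    | s2, lb => .atom s2
    | s2, lc => .atom s3
    | s3, la => .atom dead
    | s3, lb => .atom s3
    | s3, lc => .atom s3
    | dead, _ => .atom dead
  acc := fun t => InfOften fun n => (t n).2.2 = s1 ∨ (t n).2.2 = s3


open L3 St5

/-! ### Auxiliary machinery -/

/-- The full transition relation of the example automaton. -/
def Trans : St5 → L3 → St5 → Prop := fun q x q' =>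
  match q, x with
  | s0, la => q' = s0
  | s0, lb => q' = s0 ∨ q' = s1
  | s0, lc => q' = s0 ∨ q' = s1
  | s1, la => q' = dead
  | s1, lb => q' = s1 ∨ q' = s2
  | s1, lc => q' = s1
  | s2, la => q' = dead
  | s2, lb => q' = s2
  | s2, lc => q' = s3
  | s3, la => q' = dead
  | s3, lb => q' = s3
  | s3, lc => q' = s3
  | dead, _ => q' = dead

lemma eveOutcome_atom {Q : Type} (q : Q) (e : EveChoice (PosBool.atom q)) :
    e.outcome = {q} := by cases e; rfl

lemma eveOutcome_bor_atoms {Q : Type} (p q : Q)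
    (e : EveChoice (PosBool.bor (PosBool.atom p) (PosBool.atom q))) :
    e.outcome = {p} ∨ e.outcome = {q} := by
  cases e with
  | borl c => cases c; exact Or.inl rfl
  | borr c => cases c; exact Or.inr rfl

lemma eveOutcome_band_atoms {Q : Type} (p q : Q)
    (e : EveChoice (PosBool.band (PosBool.atom p) (PosBool.atom q))) :
    e.outcome = {p} ∪ {q} := by
  cases e with
  | band c d => cases c; cases d; rfl

lemma adamOutcome_atom {Q : Type} (q : Q) (a : AdamChoice (PosBool.atom q)) :
    a.outcome = {q} := by cases a; rfl

lemma adamOutcome_band_atoms {Q : Type} (p q : Q)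
    (a : AdamChoice (PosBool.band (PosBool.atom p) (PosBool.atom q))) :
    a.outcome = {p} ∨ a.outcome = {q} := by
  cases a with
  | bandl c => cases c; exact Or.inl rfl
  | bandr c => cases c; exact Or.inr rfl

lemma eve_outcome_trans : ∀ (q : St5) (x : L3) (e : EveChoice (exampleAut.δ q x))
    (q' : St5), q' ∈ e.outcome → Trans q x q' := by
  intro q x e q' h
  cases q <;> cases x <;>
    first
    | (rw [show e.outcome = _ from eveOutcome_atom _ e] at h; simpa [Trans] using h)
    | (refine Or.elim (show e.outcome = _ ∨ e.outcome = _ from eveOutcome_bor_atoms _ _ e) (fun he => ?_) (fun he => ?_) <;> rw [he] at h <;>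
        simp [Trans] at h ⊢ <;> tauto)
    | (rw [show e.outcome = _ from eveOutcome_band_atoms _ _ e] at h; simp [Trans] at h ⊢; tauto)

lemma adam_outcome_trans : ∀ (q : St5) (x : L3) (a : AdamChoice (exampleAut.δ q x))
    (q' : St5), q' ∈ a.outcome → Trans q x q' := by
  intro q x a q' h
  cases q <;> cases x <;>
    first
    | (rw [show a.outcome = _ from adamOutcome_atom _ a] at h; simpa [Trans] using h)
    | (refine Or.elim (show a.outcome = _ ∨ a.outcome = _ from adamOutcome_band_atoms _ _ a) (fun he => ?_) (fun he => ?_) <;> rw [he] at h <;>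
        simp [Trans] at h ⊢ <;> tauto)
    | (cases a with
       | bor c d =>
          cases c; cases d
          simp [AdamChoice.outcome, Trans] at h ⊢; tauto)

/-- Adam picking the leftmost atom of Eve's choice. -/
def leftAtom {Q : Type} : {φ : PosBool Q} → EveChoice φ → Q
  | _, .atom q => q
  | _, .band c _ => leftAtom c
  | _, .borl c => leftAtom c
  | _, .borr c => leftAtom c

lemma leftAtom_mem {Q : Type} : ∀ {φ : PosBool Q} (e : EveChoice φ),
    leftAtom e ∈ e.outcome := by
  intro φ e
  induction e with
  | atom q => exact rfl
  | band c d ihc ihd => exact Or.inl ihc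
  | borl c ih => exact ih
  | borr c ih => exact ih

lemma leftAtom_atom {Q : Type} (q : Q) (e : EveChoice (PosBool.atom q)) :
    leftAtom e = q := by cases e; rfl

lemma leftAtom_band_atoms {Q : Type} (p q : Q)
    (e : EveChoice (PosBool.band (PosBool.atom p) (PosBool.atom q))) :
    leftAtom e = p := by
  cases e with
  | band c d => cases c; rfl

/-- Eve picking the rightmost atom of Adam's choice. -/
def rightAtom {Q : Type} : {φ : PosBool Q} → AdamChoice φ → Q
  | _, .atom q => q
  | _, .bandl c => rightAtom c
  | _, .bandr c => rightAtom c
  | _, .bor _ d => rightAtom d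

lemma rightAtom_mem {Q : Type} : ∀ {φ : PosBool Q} (a : AdamChoice φ),
    rightAtom a ∈ a.outcome := by
  intro φ a
  induction a with
  | atom q => exact rfl
  | bandl c ih => exact ih
  | bandr c ih => exact ih
  | bor c d ihc ihd => exact Or.inr ihd

lemma rightAtom_bor_atoms {Q : Type} (p q : Q)
    (a : AdamChoice (PosBool.bor (PosBool.atom p) (PosBool.atom q))) :
    rightAtom a = q := by
  cases a with
  | bor c d => cases d; rfl

lemma exampleAcc_iff (w : ℕ → L3) (ρ : ℕ → St5) :
    exampleAut.acc (trace w ρ) ↔ InfOften (fun n => ρ (n + 1) = s1 ∨ ρ (n + 1) = s3) :=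
  Iff.rfl


/-- Eve's positional choice in the model-checking game: stay in `s0` until
time `N` (past the last `a`), then move to `s1`. -/
def mkChoice (N n : ℕ) : (q : St5) → (x : L3) → EveChoice (exampleAut.δ q x)
  | s0, la => .atom s0
  | s0, lb => if n < N then .borl (.atom s0) else .borr (.atom s1)
  | s0, lc => if n < N then .borl (.atom s0) else .borr (.atom s1)
  | s1, la => .atom dead
  | s1, lb => .band (.atom s1) (.atom s2)
  | s1, lc => .atom s1
  | s2, la => .atom dead
  | s2, lb => .atom s2
  | s2, lc => .atom s3
  | s3, la => .atom dead
  | s3, lb => .atom s3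
  | s3, lc => .atom s3
  | dead, _ => .atom dead

lemma accepts_of (w : ℕ → L3) (N : ℕ) (hN : ∀ n, N ≤ n → w n ≠ la)
    (hc : InfOften fun n => w n = lc) : exampleAut.Accepts w := by
  refine ⟨fun _ n q => mkChoice N n q (w n), ?_⟩
  intro ρ h0 hcons
  have inv1 : ∀ n, n ≤ N → ρ n = s0 := by
    intro n
    induction n with
    | zero => intro _; exact h0
    | succ n ih =>
      intro hn
      have hn' : n < N := by omega
      have hρ := ih (le_of_lt hn')
      have hmem : ρ (n + 1) ∈ (mkChoice N n (ρ n) (w n)).outcome := hcons n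
      rw [hρ] at hmem
      revert hmem
      cases hx : w n <;> intro hmem <;>
        simp [mkChoice, hn', EveChoice.outcome] at hmem <;> exact hmem
  have hstep1 : ρ (N + 1) = s1 := by
    have hρ := inv1 N le_rfl
    have hmem : ρ (N + 1) ∈ (mkChoice N N (ρ N) (w N)).outcome := hcons N
    rw [hρ] at hmem
    have hwa := hN N le_rfl
    revert hmem
    cases hx : w N <;> intro hmem
    · exact absurd hx hwa
    all_goals simp [mkChoice, EveChoice.outcome] at hmem <;> exact hmem
  have inv2 : ∀ n, N + 1 ≤ n → (ρ n = s1 ∨ ρ n = s2 ∨ ρ n = s3) := by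
    intro n hn
    induction n, hn using Nat.le_induction with
    | base => exact Or.inl hstep1
    | succ n hn ih =>
      have hmem : ρ (n + 1) ∈ (mkChoice N n (ρ n) (w n)).outcome := hcons n
      have hwa : w n ≠ la := hN n (by omega)
      revert hmem
      rcases ih with h | h | h <;> rw [h] <;>
        cases hx : w n <;> intro hmem <;>
        first
        | exact absurd hx hwa
        | (simp [mkChoice, EveChoice.outcome] at hmem; tauto)
  rw [exampleAcc_iff]
  intro M
  obtain ⟨n, hn, hwc⟩ := hc (max M (N + 1))
  have h1 : N + 1 ≤ n := le_trans (le_max_right _ _) hn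
  have hM : M ≤ n := le_trans (le_max_left _ _) hn
  refine ⟨n, hM, ?_⟩
  have hmem : ρ (n + 1) ∈ (mkChoice N n (ρ n) (w n)).outcome := hcons n
  revert hmem
  rcases inv2 n h1 with h | h | h <;> rw [h, hwc] <;> intro hmem <;>
    simp [mkChoice, EveChoice.outcome] at hmem <;> tauto


/-- The forced successor under the leftmost-atom policy, away from `s0`. -/
def detNext : St5 → L3 → St5
  | s0, _ => s0
  | s1, la => dead
  | s1, lb => s1
  | s1, lc => s1
  | s2, la => dead
  | s2, lb => s2
  | s2, lc => s3
  | s3, la => dead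
  | s3, _ => s3
  | dead, _ => dead

lemma leftAtom_eval (q : St5) (x : L3) (hq : q ≠ s0)
    (e : EveChoice (exampleAut.δ q x)) : leftAtom e = detNext q x := by
  cases q <;> cases x <;>
    first
    | exact absurd rfl hq
    | exact leftAtom_atom _ e
    | exact leftAtom_band_atoms _ _ e

lemma s2_mem (q : St5) (x : L3) (hq : q = s1) (hx : x = lb)
    (e : EveChoice (exampleAut.δ q x)) : s2 ∈ e.outcome := by
  subst hq; subst hx; rw [show e.outcome = _ from eveOutcome_band_atoms _ _ e]; exact Or.inr rfl

open Classical in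
/-- Adam's counter-run in the model-checking game: follow the leftmost atom of
Eve's choice, except at `s1` reading `b` with no `c` ever again, where he
moves to `s2`. -/
noncomputable def advRun (w : ℕ → L3)
    (σ : List St5 → (n : ℕ) → (q : St5) → EveChoice (exampleAut.δ q (w n))) :
    ℕ → List St5 × St5
  | 0 => ([], s0)
  | n + 1 =>
    ((advRun w σ n).1 ++ [(advRun w σ n).2],
      if (advRun w σ n).2 = s1 ∧ w n = lb ∧ (∀ k, n ≤ k → w k ≠ lc) then s2
      else leftAtom (σ (advRun w σ n).1 n (advRun w σ n).2))

lemma advRun_fst (w : ℕ → L3)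
    (σ : List St5 → (n : ℕ) → (q : St5) → EveChoice (exampleAut.δ q (w n))) :
    ∀ n, (advRun w σ n).1 = List.ofFn (fun i : Fin n => (advRun w σ i.val).2) := by
  intro n
  induction n with
  | zero => rfl
  | succ n ih =>
    show (advRun w σ n).1 ++ [(advRun w σ n).2] = _
    rw [List.ofFn_succ']
    simp only [Fin.coe_castSucc, Fin.val_last, List.concat_eq_append, ih]

lemma advRun_cons (w : ℕ → L3)
    (σ : List St5 → (n : ℕ) → (q : St5) → EveChoice (exampleAut.δ q (w n)))
    (n : ℕ) :
    (advRun w σ (n+1)).2 ∈ (σ (advRun w σ n).1 n (advRun w σ n).2).outcome := by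
  classical
  show (if _ then s2 else _) ∈ _
  split_ifs with h
  · exact s2_mem _ _ h.1 h.2.1 _
  · exact leftAtom_mem _

lemma advRun_trans (w : ℕ → L3)
    (σ : List St5 → (n : ℕ) → (q : St5) → EveChoice (exampleAut.δ q (w n)))
    (n : ℕ) : Trans (advRun w σ n).2 (w n) (advRun w σ (n+1)).2 := by
  classical
  show Trans _ _ (if _ then s2 else _)
  split_ifs with h
  · rw [h.1, h.2.1]; exact Or.inr rfl
  · exact eve_outcome_trans _ _ _ _ (leftAtom_mem _)

lemma trans_not_s0 {q : St5} {x : L3} {q' : St5} (h : Trans q x q') (hq : q ≠ s0) :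
    q' ≠ s0 := by
  intro h0
  subst h0
  cases q <;> cases x <;> simp [Trans] at h <;> exact hq rfl

lemma trans_la {q q' : St5} (h : Trans q la q') (hq : q ≠ s0) : q' = dead := by
  cases q <;> simp [Trans] at h <;> first | exact absurd rfl hq | exact h

lemma trans_dead {x : L3} {q' : St5} (h : Trans dead x q') : q' = dead := by
  cases x <;> exact h

lemma accepts_to (w : ℕ → L3) (h : exampleAut.Accepts w) :
    (∃ N, ∀ n, N ≤ n → w n ≠ la) ∧ InfOften fun n => w n = lc := by
  classical
  obtain ⟨σ, hσ⟩ := h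
  have hacc : InfOften (fun n => (advRun w σ (n+1)).2 = s1 ∨ (advRun w σ (n+1)).2 = s3) := by
    have h2 := hσ (fun n => (advRun w σ n).2) rfl ?_
    · exact h2
    · intro n
      have h3 := advRun_cons w σ n
      rwa [advRun_fst] at h3
  have hstep : ∀ n, Trans (advRun w σ n).2 (w n) (advRun w σ (n+1)).2 := advRun_trans w σ
  constructor
  · by_contra hfa
    push_neg at hfa
    obtain ⟨n₀, -, hs⟩ := hacc 0
    have hnz : ∀ k, n₀ + 1 ≤ k → (advRun w σ k).2 ≠ s0 := by
      intro k hk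
      induction k, hk using Nat.le_induction with
      | base => rcases hs with h' | h' <;> rw [h'] <;> simp
      | succ k hk ih => exact trans_not_s0 (hstep k) ih
    obtain ⟨m, hm, hma⟩ := hfa (n₀ + 1)
    have hd : (advRun w σ (m+1)).2 = dead := by
      have ht := hstep m
      rw [hma] at ht
      exact trans_la ht (hnz m hm)
    have hdd : ∀ k, m + 1 ≤ k → (advRun w σ k).2 = dead := by
      intro k hk
      induction k, hk using Nat.le_induction with
      | base => exact hd
      | succ k hk ih =>
        have ht := hstep k
        rw [ih] at ht
        exact trans_dead ht
    obtain ⟨j, hj, hsj⟩ := hacc (m + 1)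
    have hD := hdd (j+1) (by omega)
    rcases hsj with h' | h' <;> rw [hD] at h' <;> simp at h'
  · intro M
    by_contra hic
    push_neg at hic
    have hnoc : ∀ n, M ≤ n → w n ≠ lc := fun n hn h' => hic n hn h'
    have inv : ∀ n, ((advRun w σ n).2 = s2 → ∀ k, n ≤ k → w k ≠ lc) ∧
        (advRun w σ n).2 ≠ s3 := by
      intro n
      induction n with
      | zero =>
        constructor
        · intro h2; simp [advRun] at h2
        · simp [advRun]
      | succ n ih =>
        have heq : (advRun w σ (n+1)).2 =
            if (advRun w σ n).2 = s1 ∧ w n = lb ∧ (∀ k, n ≤ k → w k ≠ lc) then s2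
            else leftAtom (σ (advRun w σ n).1 n (advRun w σ n).2) := rfl
        by_cases hq0 : (advRun w σ n).2 = s0
        · have ht := hstep n
          rw [hq0] at ht
          constructor
          · intro h2
            rw [h2] at ht
            cases hx : w n <;> rw [hx] at ht <;> simp [Trans] at ht
          · intro h3
            rw [h3] at ht
            cases hx : w n <;> rw [hx] at ht <;> simp [Trans] at ht
        · rw [heq]
          split_ifs with hcond
          · refine ⟨fun _ => fun k hk => hcond.2.2 k (by omega), by simp⟩
          · rw [leftAtom_eval _ _ hq0]
            rcases hq : (advRun w σ n).2 with _ | _ | _ | _ | _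
            · exact absurd hq hq0
            · constructor
              · intro h2
                cases hx : w n <;> rw [hx] at h2 <;> simp [detNext] at h2
              · intro h3
                cases hx : w n <;> rw [hx] at h3 <;> simp [detNext] at h3
            · have hnc := ih.1 hq
              constructor
              · intro _ k hk
                exact hnc k (by omega)
              · intro h3
                cases hx : w n
                · rw [hx] at h3; simp [detNext] at h3
                · rw [hx] at h3; simp [detNext] at h3
                · exact absurd hx (hnc n le_rfl)
            · exact absurd hq ih.2
            · constructor
              · intro h2
                cases hx : w n <;> rw [hx] at h2 <;> simp [detNext] at h2
              · intro h3
                cases hx : w n <;> rw [hx] at h3 <;> simp [detNext] at h3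
    have habs : ∀ n, M ≤ n → ((advRun w σ n).2 = s2 ∨ (advRun w σ n).2 = dead) →
        ((advRun w σ (n+1)).2 = s2 ∨ (advRun w σ (n+1)).2 = dead) := by
      intro n hn hcase
      have ht := hstep n
      rcases hcase with h2 | h2 <;> rw [h2] at ht
      · cases hx : w n
        · rw [hx] at ht; exact Or.inr ht
        · rw [hx] at ht; exact Or.inl ht
        · exact absurd hx (hnoc n hn)
      · cases hx : w n <;> rw [hx] at ht <;> exact Or.inr ht
    obtain ⟨j, hjM, hsj⟩ := hacc M
    have hj1 : (advRun w σ (j+1)).2 = s1 := by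
      rcases hsj with h' | h'
      · exact h'
      · exact absurd h' (inv (j+1)).2
    have hj2 : (advRun w σ (j+2)).2 = s2 ∨ (advRun w σ (j+2)).2 = dead := by
      have heq : (advRun w σ (j+2)).2 =
          if (advRun w σ (j+1)).2 = s1 ∧ w (j+1) = lb ∧ (∀ k, j+1 ≤ k → w k ≠ lc) then s2
          else leftAtom (σ (advRun w σ (j+1)).1 (j+1) (advRun w σ (j+1)).2) := rfl
      rw [heq]
      split_ifs with hcond
      · exact Or.inl rfl
      · rw [leftAtom_eval _ _ (by rw [hj1]; simp), hj1]
        cases hx : w (j+1)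
        · exact Or.inr rfl
        · exact absurd ⟨hj1, hx, fun k hk => hnoc k (by omega)⟩ hcond
        · exact absurd hx (hnoc (j+1) (by omega))
    have hall : ∀ k, j + 2 ≤ k → ((advRun w σ k).2 = s2 ∨ (advRun w σ k).2 = dead) := by
      intro k hk
      induction k, hk using Nat.le_induction with
      | base => exact hj2
      | succ k hk ih => exact habs k (by omega) ih
    obtain ⟨j', hj', hsj'⟩ := hacc (j + 2)
    have hD := hall (j' + 1) (by omega)
    rcases hsj' with h' | h' <;> rcases hD with h2 | h2 <;> rw [h'] at h2 <;> simp at h2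

lemma accepts_iff (w : ℕ → L3) :
    exampleAut.Accepts w ↔
      ((∃ N, ∀ n, N ≤ n → w n ≠ la) ∧ InfOften fun n => w n = lc) := by
  constructor
  · exact accepts_to w
  · rintro ⟨⟨N, hN⟩, hc⟩
    exact accepts_of w N hN hc


/-! ### Adam wins Eve's letter game -/

def adamLetter : St5 → L3
  | s1 => la
  | _ => lc

/-- The run built by Adam's strategy against Eve's strategy `σ` in Eve's letter
game: play `c` while at `s0`, play `a` at `s1`, then `c` forever. -/
def egRun (σ : List (L3 × St5) → (a : L3) → (q : St5) → EveChoice (exampleAut.δ q a)) :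
    ℕ → List (L3 × St5) × St5
  | 0 => ([], s0)
  | n + 1 =>
    ((egRun σ n).1 ++
        [(adamLetter (egRun σ n).2,
          leftAtom (σ (egRun σ n).1 (adamLetter (egRun σ n).2) (egRun σ n).2))],
      leftAtom (σ (egRun σ n).1 (adamLetter (egRun σ n).2) (egRun σ n).2))

lemma egRun_fst (σ : List (L3 × St5) → (a : L3) → (q : St5) → EveChoice (exampleAut.δ q a)) :
    ∀ n, (egRun σ n).1 =
      List.ofFn (fun i : Fin n =>
        (adamLetter (egRun σ i.val).2, (egRun σ (i.val + 1)).2)) := by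
  intro n
  induction n with
  | zero => rfl
  | succ n ih =>
    rw [List.ofFn_succ']
    simp only [Fin.coe_castSucc, Fin.val_last, List.concat_eq_append, ← ih]
    rfl

lemma egRun_trans (σ : List (L3 × St5) → (a : L3) → (q : St5) → EveChoice (exampleAut.δ q a))
    (n : ℕ) : Trans (egRun σ n).2 (adamLetter (egRun σ n).2) (egRun σ (n + 1)).2 :=
  eve_outcome_trans _ _ _ _ (leftAtom_mem _)

lemma not_existsGFG : ¬ ExistsGFG exampleAut := by
  classical
  rintro ⟨σ, hσ⟩
  have hcons : ∀ n, (egRun σ (n + 1)).2 ∈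
      (σ (List.ofFn fun i : Fin n =>
          (adamLetter (egRun σ i.val).2, (egRun σ (i.val + 1)).2))
        (adamLetter (egRun σ n).2) (egRun σ n).2).outcome := by
    intro n
    rw [← egRun_fst]
    exact leftAtom_mem _
  by_cases hall : ∀ n, (egRun σ n).2 = s0
  · have hw : ∀ n, adamLetter (egRun σ n).2 = lc := by
      intro n; rw [hall n]; rfl
    have hAcc : exampleAut.Accepts fun n => adamLetter (egRun σ n).2 := by
      rw [accepts_iff]
      refine ⟨⟨0, fun n _ => by rw [hw]; simp⟩, fun N => ⟨N, le_rfl, hw N⟩⟩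
    have hacc := hσ (fun n => adamLetter (egRun σ n).2) (fun n => (egRun σ n).2)
      rfl hcons hAcc
    obtain ⟨n, -, hs⟩ := hacc 0
    have hs' : (egRun σ (n + 1)).2 = s1 ∨ (egRun σ (n + 1)).2 = s3 := hs
    rcases hs' with h' | h' <;> rw [hall (n + 1)] at h' <;> simp at h'
  · push_neg at hall
    have hm := Nat.find_spec hall
    have hs0 : ∀ k, k < Nat.find hall → (egRun σ k).2 = s0 :=
      fun k hk => not_not.mp (Nat.find_min hall hk)
    have hm0 : Nat.find hall ≠ 0 := by
      intro h0
      exact hm (by rw [h0]; rfl)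
    obtain ⟨m, hmeq⟩ := Nat.exists_eq_succ_of_ne_zero hm0
    rw [hmeq] at hm
    have hms0 : (egRun σ m).2 = s0 := hs0 m (by omega)
    have hm1 : (egRun σ (m + 1)).2 = s1 := by
      have ht := egRun_trans σ m
      rw [hms0] at ht
      simp [Trans, adamLetter] at ht
      rcases ht with h' | h'
      · exact absurd h' hm
      · exact h'
    have hm2 : (egRun σ (m + 2)).2 = dead := by
      have ht := egRun_trans σ (m + 1)
      rw [hm1] at ht
      simpa [Trans, adamLetter] using ht
    have hdd : ∀ k, m + 2 ≤ k → (egRun σ k).2 = dead := by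
      intro k hk
      induction k, hk using Nat.le_induction with
      | base => exact hm2
      | succ k hk ih =>
        have ht := egRun_trans σ k
        rw [ih] at ht
        exact trans_dead ht
    have hAcc : exampleAut.Accepts fun n => adamLetter (egRun σ n).2 := by
      rw [accepts_iff]
      constructor
      · refine ⟨m + 2, fun n hn => ?_⟩
        rw [hdd n hn]
        simp [adamLetter]
      · intro N
        refine ⟨max N (m + 2), le_max_left _ _, ?_⟩
        show adamLetter (egRun σ (max N (m + 2))).2 = lc
        rw [hdd (max N (m + 2)) (le_max_right _ _)]
        rfl
    have hacc := hσ (fun n => adamLetter (egRun σ n).2) (fun n => (egRun σ n).2)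
      rfl hcons hAcc
    obtain ⟨j, hj, hs⟩ := hacc (m + 2)
    have hs' : (egRun σ (j + 1)).2 = s1 ∨ (egRun σ (j + 1)).2 = s3 := hs
    have hD := hdd (j + 1) (by omega)
    rcases hs' with h' | h' <;> rw [hD] at h' <;> simp at h'

/-! ### Eve wins Adam's letter game -/

def eveLetter : St5 → L3
  | s2 => lc
  | _ => lb

/-- The run built by Eve's strategy against Adam's strategy `τ` in Adam's
letter game: play `b` and move to `s1`; keep playing `b` until Adam moves to
`s2`; then play `c` once and `b` forever. -/
def fgRun (τ : List (L3 × St5) → (a : L3) → (q : St5) → AdamChoice (exampleAut.δ q a)) :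
    ℕ → List (L3 × St5) × St5
  | 0 => ([], s0)
  | n + 1 =>
    ((fgRun τ n).1 ++
        [(eveLetter (fgRun τ n).2,
          rightAtom (τ (fgRun τ n).1 (eveLetter (fgRun τ n).2) (fgRun τ n).2))],
      rightAtom (τ (fgRun τ n).1 (eveLetter (fgRun τ n).2) (fgRun τ n).2))

lemma fgRun_fst (τ : List (L3 × St5) → (a : L3) → (q : St5) → AdamChoice (exampleAut.δ q a)) :
    ∀ n, (fgRun τ n).1 =
      List.ofFn (fun i : Fin n =>
        (eveLetter (fgRun τ i.val).2, (fgRun τ (i.val + 1)).2)) := by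
  intro n
  induction n with
  | zero => rfl
  | succ n ih =>
    rw [List.ofFn_succ']
    simp only [Fin.coe_castSucc, Fin.val_last, List.concat_eq_append, ← ih]
    rfl

lemma fgRun_trans (τ : List (L3 × St5) → (a : L3) → (q : St5) → AdamChoice (exampleAut.δ q a))
    (n : ℕ) : Trans (fgRun τ n).2 (eveLetter (fgRun τ n).2) (fgRun τ (n + 1)).2 :=
  adam_outcome_trans _ _ _ _ (rightAtom_mem _)

lemma not_forallGFG : ¬ ForallGFG exampleAut := by
  classical
  rintro ⟨τ, hτ⟩
  have hcons : ∀ n, (fgRun τ (n + 1)).2 ∈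
      (τ (List.ofFn fun i : Fin n =>
          (eveLetter (fgRun τ i.val).2, (fgRun τ (i.val + 1)).2))
        (eveLetter (fgRun τ n).2) (fgRun τ n).2).outcome := by
    intro n
    rw [← fgRun_fst]
    exact rightAtom_mem _
  have h1 : (fgRun τ 1).2 = s1 := rightAtom_bor_atoms s0 s1 _
  have hst : ∀ n, 1 ≤ n →
      ((fgRun τ n).2 = s1 ∨ (fgRun τ n).2 = s2 ∨ (fgRun τ n).2 = s3) := by
    intro n hn
    induction n, hn using Nat.le_induction with
    | base => exact Or.inl h1
    | succ n hn ih =>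
      have ht := fgRun_trans τ n
      rcases ih with h' | h' | h' <;> rw [h'] at ht <;>
        simp [Trans, eveLetter] at ht <;> tauto
  have hs2s3 : ∀ n, (fgRun τ n).2 = s2 → (fgRun τ (n + 1)).2 = s3 := by
    intro n hn
    have ht := fgRun_trans τ n
    rw [hn] at ht
    simpa [Trans, eveLetter] using ht
  have hs3 : ∀ n, (fgRun τ n).2 = s3 → (fgRun τ (n + 1)).2 = s3 := by
    intro n hn
    have ht := fgRun_trans τ n
    rw [hn] at ht
    simpa [Trans, eveLetter] using ht
  have hacc : exampleAut.acc
      (trace (fun n => eveLetter (fgRun τ n).2) (fun n => (fgRun τ n).2)) := by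
    rw [exampleAcc_iff]
    intro M
    rcases hst (M + 1) (by omega) with h' | h' | h'
    · have ht := fgRun_trans τ (M + 1)
      rw [h'] at ht
      simp [Trans, eveLetter] at ht
      rcases ht with h2 | h2
      · exact ⟨M + 1, by omega, Or.inl h2⟩
      · exact ⟨M + 2, by omega, Or.inr (hs2s3 _ h2)⟩
    · exact ⟨M + 1, by omega, Or.inr (hs2s3 _ h')⟩
    · exact ⟨M + 1, by omega, Or.inr (hs3 _ h')⟩
  have hnAcc : ¬ exampleAut.Accepts fun n => eveLetter (fgRun τ n).2 := by
    rw [accepts_iff]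
    rintro ⟨-, hic⟩
    by_cases hs2 : ∃ m, (fgRun τ m).2 = s2
    · obtain ⟨m, hm⟩ := hs2
      have h3 : ∀ k, m + 1 ≤ k → (fgRun τ k).2 = s3 := by
        intro k hk
        induction k, hk using Nat.le_induction with
        | base => exact hs2s3 m hm
        | succ k hk ih => exact hs3 k ih
      obtain ⟨n, hn, hc⟩ := hic (m + 1)
      rw [h3 n hn] at hc
      simp [eveLetter] at hc
    · push_neg at hs2
      obtain ⟨n, -, hc⟩ := hic 0
      have : (fgRun τ n).2 = s2 := by
        rcases hq : (fgRun τ n).2 with _ | _ | _ | _ | _ <;> rw [hq] at hc <;>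
          first
          | rfl
          | simp [eveLetter] at hc
      exact hs2 n this
  rcases hτ (fun n => eveLetter (fgRun τ n).2) (fun n => (fgRun τ n).2)
      rfl hcons with h | h
  · exact hnAcc h
  · exact h hacc

/-- the example automaton recognises the language of words in
which `a` occurs finitely often and `c` occurs infinitely often, and it is
neither ∃-GFG nor ∀-GFG (Adam wins Eve's letter game and Eve wins Adam's). -/
theorem exampleAut_language_and_not_gfg :
    (∀ w : ℕ → L3, exampleAut.Accepts w ↔
      ((∃ N, ∀ n, N ≤ n → w n ≠ L3.la) ∧ InfOften fun n => w n = L3.lc)) ∧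
    ¬ ExistsGFG exampleAut ∧ ¬ ForallGFG exampleAut :=
  ⟨accepts_iff, not_existsGFG, not_forallGFG⟩

end GFGPaper
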